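/- Let F(u) = ½∫_{(-1,1)} |u'|² + u dx (i.e. f = −1) on H¹₀(−1,1) and u₀ = 0. Then 0 ∈ ∂₊F(u₀) and 0 is the minimal selection ∂₊°F(u₀). Moreover, if u ∈ H¹₀(−1,1) satisfies u > 0 on (−1,1) and [u''−1]₊ ≢ 0, then ∂₊°F(u) = {−[u''−1]₊} and ⟨−[u''−1]₊ − 0, u − u₀⟩ < 0. Hence neither ∂₊°F nor ∂₊F is a monotone operator on L². -/

import Mathlib

set_option maxHeartbeats 1000000

open MeasureTheory Set intervalIntegral Metric


/-- square-integrable (with a.e.-measurability) implies integrable on the interval -/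
lemma aux_int_of_sq (f : ℝ → ℝ)
    (hm : AEStronglyMeasurable f (volume.restrict (Set.uIoc (-1:ℝ) 1)))
    (h : IntervalIntegrable (fun x => f x ^ 2) volume (-1) 1) :
    IntervalIntegrable f volume (-1) 1 := by
  have hb : IntervalIntegrable (fun x => 1 + f x ^ 2) volume (-1) 1 :=
    (intervalIntegrable_const (c := 1)).add h
  rw [intervalIntegrable_iff] at hb ⊢
  refine hb.mono' hm (Filter.Eventually.of_forall fun x => ?_)
  simp only [Real.norm_eq_abs]
  nlinarith [sq_nonneg (|f x| - 1), sq_abs (f x), abs_nonneg (f x)]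

lemma aux_c1 (u : ℝ → ℝ) (hu2 : ContDiff ℝ 2 u) : ContDiff ℝ 1 (deriv u) :=
  (contDiff_succ_iff_deriv.mp (show ContDiff ℝ (1+1) u by exact_mod_cast hu2)).2.2

lemma aux_cc (u : ℝ → ℝ) (hu2 : ContDiff ℝ 2 u) : Continuous (deriv (deriv u)) :=
  ((contDiff_succ_iff_deriv.mp
    (show ContDiff ℝ (0+1) (deriv u) by exact_mod_cast aux_c1 u hu2)).2.2).continuous

/-- integration by parts against a C² function -/
lemma aux_ibp (u : ℝ → ℝ) (hu2 : ContDiff ℝ 2 u) (w : ℝ → ℝ) (hw : Differentiable ℝ w)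
    (hw1 : w (-1) = 0) (hw2 : w 1 = 0)
    (hwi : IntervalIntegrable (deriv w) volume (-1) 1) :
    ∫ x in (-1:ℝ)..1, (deriv (deriv u) x * w x + deriv u x * deriv w x) = 0 := by
  have hu1 : ContDiff ℝ 1 (deriv u) := aux_c1 u hu2
  have hu'c : Continuous (deriv u) := hu1.continuous
  have hcc : Continuous (deriv (deriv u)) := aux_cc u hu2
  have h := intervalIntegral.integral_eq_sub_of_hasDerivAt
    (f := fun x => deriv u x * w x)
    (f' := fun x => deriv (deriv u) x * w x + deriv u x * deriv w x)
    (a := (-1:ℝ)) (b := 1) ?_ ?_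
  · rw [h, hw1, hw2]; ring
  · intro x _
    exact (((hu1.differentiable one_ne_zero) x).hasDerivAt).mul ((hw x).hasDerivAt)
  · exact ((hcc.mul hw.continuous).intervalIntegrable _ _).add
      (hwi.continuousOn_mul hu'c.continuousOn)

lemma aux_eps (A M : ℝ) (hM : 0 ≤ M) (h : ∀ t : ℝ, 0 < t → t ≤ 1 → 0 ≤ A + t * M) :
    0 ≤ A := by
  by_contra hA
  push_neg at hA
  set t := min 1 ((-A) / (M + 1)) with ht
  have ht0 : 0 < t := lt_min one_pos (div_pos (by linarith) (by linarith))
  have h1 := h t ht0 (min_le_left _ _)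
  have htM : t * M ≤ (-A) / (M + 1) * M :=
    mul_le_mul_of_nonneg_right (min_le_right _ _) hM
  have h2 : (-A) / (M + 1) * M < -A := by
    rw [div_mul_eq_mul_div, div_lt_iff₀ (by linarith)]
    nlinarith
  linarith

/-- positivity of an interval integral of a nonneg continuous function positive somewhere -/
lemma aux_pos (g : ℝ → ℝ) (hg : Continuous g) (hnn : ∀ x ∈ Set.Ioc (-1:ℝ) 1, 0 ≤ g x)
    (x₀ : ℝ) (hx₀ : x₀ ∈ Set.Ioo (-1:ℝ) 1) (hpos : 0 < g x₀) :
    0 < ∫ x in (-1:ℝ)..1, g x := by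
  rw [intervalIntegral.integral_of_le (by norm_num)]
  rw [MeasureTheory.setIntegral_pos_iff_support_of_nonneg_ae]
  · -- 0 < volume (support g ∩ Ioc (-1) 1)
    have hopen : IsOpen (Function.support g ∩ Set.Ioo (-1:ℝ) 1) :=
      (isOpen_compl_singleton.preimage hg).inter isOpen_Ioo
    have hx : x₀ ∈ Function.support g ∩ Set.Ioo (-1:ℝ) 1 := ⟨ne_of_gt hpos, hx₀⟩
    have hsub : Function.support g ∩ Set.Ioo (-1:ℝ) 1 ⊆ Function.support g ∩ Set.Ioc (-1:ℝ) 1 :=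
      Set.inter_subset_inter_right _ Set.Ioo_subset_Ioc_self
    calc (0:ENNReal) < volume (Function.support g ∩ Set.Ioo (-1:ℝ) 1) :=
          hopen.measure_pos volume ⟨x₀, hx⟩
      _ ≤ _ := measure_mono hsub
  · exact (ae_restrict_iff' measurableSet_Ioc).2 (Filter.Eventually.of_forall hnn)
  · exact hg.integrableOn_Ioc

/-- transfer of integrability between comparable nonnegative weights -/
lemma aux_tr (ξ ψ₁ ψ₂ : ℝ → ℝ) (h1 : Continuous ψ₁) (h2 : Continuous ψ₂)
    (h1n : ∀ x, 0 ≤ ψ₁ x) (h2n : ∀ x, 0 ≤ ψ₂ x) (K : ℝ) (hK : 0 ≤ K) (hle : ∀ x, ψ₂ x ≤ K * ψ₁ x)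
    (hint : IntervalIntegrable (fun x => ξ x * ψ₁ x) volume (-1) 1) :
    IntervalIntegrable (fun x => ξ x * ψ₂ x) volume (-1) 1 := by
  set ρ : ℝ → ℝ := fun x => ψ₂ x * (ψ₁ x)⁻¹ with hρ
  have hkey : (fun x => ξ x * ψ₂ x) = fun x => ρ x * (ξ x * ψ₁ x) := by
    funext x
    by_cases hx : ψ₁ x = 0
    · have : ψ₂ x = 0 := le_antisymm (by simpa [hx] using hle x) (h2n x)
      simp [this, hρ, hx]
    · simp only [hρ]
      field_simp
  rw [hkey, intervalIntegrable_iff] at *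
  refine hint.bdd_mul (c := K) ?_ (Filter.Eventually.of_forall fun x => ?_)
  · exact ((h2.measurable.mul h1.measurable.inv).aestronglyMeasurable)
  · rw [Real.norm_eq_abs, abs_of_nonneg]
    · by_cases hx : ψ₁ x = 0
      · simp [hρ, hx]; exact hK
      · have hx0 : 0 < ψ₁ x := (h1n x).lt_of_ne (Ne.symm hx)
        rw [hρ]
        rw [mul_inv_le_iff₀ hx0]  -- maybe name differs
        linarith [hle x]
    · exact mul_nonneg (h2n x) (inv_nonneg.2 (h1n x))

lemma aux_mem (u : ℝ → ℝ) (hu2 : ContDiff ℝ 2 u) (hub1 : u (-1) = 0) (hub2 : u 1 = 0)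
    (v : ℝ → ℝ) (hvd : Differentiable ℝ v) (hv1 : v (-1) = 0) (hv2 : v 1 = 0)
    (hv4 : IntervalIntegrable (fun x => (deriv v x) ^ 2) volume (-1) 1)
    (hv5 : IntervalIntegrable v volume (-1) 1)
    (hvu : ∀ x ∈ Set.Icc (-1:ℝ) 1, u x ≤ v x) :
    (1/2) * (∫ x in (-1:ℝ)..1, (deriv u x) ^ 2) + (∫ x in (-1:ℝ)..1, u x)
      + ∫ x in (-1:ℝ)..1, (-(max (deriv (deriv u) x - 1) 0)) * (v x - u x)
    ≤ (1/2) * (∫ x in (-1:ℝ)..1, (deriv v x) ^ 2) + ∫ x in (-1:ℝ)..1, v x := by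
  have hud : Differentiable ℝ u := hu2.differentiable (by norm_num)
  have hu_cont : Continuous u := hud.continuous
  have hu'c : Continuous (deriv u) := (aux_c1 u hu2).continuous
  have hcc : Continuous (deriv (deriv u)) := aux_cc u hu2
  have hv_cont : Continuous v := hvd.continuous
  have hdvi : IntervalIntegrable (deriv v) volume (-1) 1 :=
    aux_int_of_sq _ ((measurable_deriv v).aestronglyMeasurable) hv4
  -- the difference
  set w : ℝ → ℝ := fun x => v x - u x with hwdef
  have hwd : Differentiable ℝ w := hvd.sub hud
  have hw1 : w (-1) = 0 := by simp [hwdef, hv1, hub1]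
  have hw2 : w 1 = 0 := by simp [hwdef, hv2, hub2]
  have hdw : deriv w = fun x => deriv v x - deriv u x :=
    funext fun x => deriv_sub (hvd x) (hud x)
  have hwi : IntervalIntegrable (deriv w) volume (-1) 1 := by
    rw [hdw]; exact hdvi.sub (hu'c.intervalIntegrable _ _)
  have hIBP := aux_ibp u hu2 w hwd hw1 hw2 hwi
  rw [hdw] at hIBP
  -- split IBP
  have int_a : IntervalIntegrable (fun x => deriv (deriv u) x * w x) volume (-1) 1 :=
    (hcc.mul (hv_cont.sub hu_cont)).intervalIntegrable _ _
  have int_b : IntervalIntegrable (fun x => deriv u x * (deriv v x - deriv u x)) volume (-1) 1 :=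
    (hdvi.sub (hu'c.intervalIntegrable _ _)).continuousOn_mul hu'c.continuousOn
  have hsplit : (∫ x in (-1:ℝ)..1, deriv (deriv u) x * w x)
      + (∫ x in (-1:ℝ)..1, deriv u x * (deriv v x - deriv u x)) = 0 := by
    rw [← intervalIntegral.integral_add int_a int_b]; exact hIBP
  -- step 1 : ∫ ξmin * (v-u) ≤ ∫ (1-c)(v-u)
  have int1 : IntervalIntegrable (fun x => -(max (deriv (deriv u) x - 1) 0) * (v x - u x))
      volume (-1) 1 :=
    ((((hcc.sub continuous_const).max continuous_const).neg).mul
      (hv_cont.sub hu_cont)).intervalIntegrable _ _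
  have int2 : IntervalIntegrable (fun x => (1 - deriv (deriv u) x) * (v x - u x))
      volume (-1) 1 :=
    (((continuous_const.sub hcc)).mul (hv_cont.sub hu_cont)).intervalIntegrable _ _
  have step1 : (∫ x in (-1:ℝ)..1, -(max (deriv (deriv u) x - 1) 0) * (v x - u x))
      ≤ ∫ x in (-1:ℝ)..1, (1 - deriv (deriv u) x) * (v x - u x) := by
    refine intervalIntegral.integral_mono_on (by norm_num) int1 int2 fun x hx => ?_
    have h1 : 0 ≤ v x - u x := sub_nonneg.2 (hvu x hx)
    have h2 : deriv (deriv u) x - 1 ≤ max (deriv (deriv u) x - 1) 0 := le_max_left _ _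
    nlinarith [mul_nonneg (sub_nonneg.2 h2) h1]
  -- step 2 : ∫ (1-c)(v-u) = ∫(v-u) - ∫ c(v-u)
  have int3 : IntervalIntegrable (fun x => v x - u x) volume (-1) 1 :=
    (hv_cont.sub hu_cont).intervalIntegrable _ _
  have step2 : (∫ x in (-1:ℝ)..1, (1 - deriv (deriv u) x) * (v x - u x))
      = (∫ x in (-1:ℝ)..1, (v x - u x))
        - ∫ x in (-1:ℝ)..1, deriv (deriv u) x * (v x - u x) := by
    rw [← intervalIntegral.integral_sub int3 (by simpa [hwdef] using int_a)]
    exact intervalIntegral.integral_congr fun x _ => by ring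
  -- step 3 : ∫ u'(v'-u') ≤ (1/2)(∫v'² - ∫u'²)
  have int4 : IntervalIntegrable (fun x => (1/2) * ((deriv v x) ^ 2 - (deriv u x) ^ 2))
      volume (-1) 1 :=
    (hv4.sub ((hu'c.pow 2).intervalIntegrable _ _)).const_mul _
  have step3 : (∫ x in (-1:ℝ)..1, deriv u x * (deriv v x - deriv u x))
      ≤ ∫ x in (-1:ℝ)..1, (1/2) * ((deriv v x) ^ 2 - (deriv u x) ^ 2) := by
    refine intervalIntegral.integral_mono_on (by norm_num) int_b int4 fun x _ => ?_
    nlinarith [sq_nonneg (deriv v x - deriv u x)]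
  have step3' : (∫ x in (-1:ℝ)..1, (1/2) * ((deriv v x) ^ 2 - (deriv u x) ^ 2))
      = (1/2) * ((∫ x in (-1:ℝ)..1, (deriv v x) ^ 2) - ∫ x in (-1:ℝ)..1, (deriv u x) ^ 2) := by
    rw [intervalIntegral.integral_const_mul,
      intervalIntegral.integral_sub hv4 (show IntervalIntegrable (fun x => deriv u x ^ 2) volume (-1) 1 from (hu'c.pow 2).intervalIntegrable _ _)]
  -- step 4
  have step4 : (∫ x in (-1:ℝ)..1, (v x - u x))
      = (∫ x in (-1:ℝ)..1, v x) - ∫ x in (-1:ℝ)..1, u x :=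
    intervalIntegral.integral_sub hv5 (hu_cont.intervalIntegrable _ _)
  have hcw : (∫ x in (-1:ℝ)..1, deriv (deriv u) x * (v x - u x))
      = ∫ x in (-1:ℝ)..1, deriv (deriv u) x * w x :=
    intervalIntegral.integral_congr fun x _ => by simp [hwdef]
  linarith [step1, step2, step3, step4, hsplit, step3', hcw]

lemma aux_c1' (f : ℝ → ℝ) (hf : ContDiff ℝ 1 f) : Continuous (deriv f) :=
  ((contDiff_succ_iff_deriv.mp (show ContDiff ℝ (0+1) f by exact_mod_cast hf)).2.2).continuous

lemma aux_int2 (p q : ℝ → ℝ) (hp : Continuous p) (hq : Continuous q) (a b : ℝ) :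
    ∫ x in (-1:ℝ)..1, (a * p x + b * q x)
      = a * (∫ x in (-1:ℝ)..1, p x) + b * ∫ x in (-1:ℝ)..1, q x := by
  rw [intervalIntegral.integral_add ((by fun_prop : Continuous fun x => a * p x).intervalIntegrable _ _)
    ((by fun_prop : Continuous fun x => b * q x).intervalIntegrable _ _),
    intervalIntegral.integral_const_mul, intervalIntegral.integral_const_mul]

lemma aux_int3 (p q r : ℝ → ℝ) (hp : Continuous p) (hq : Continuous q) (hr : Continuous r)
    (a b c : ℝ) :
    ∫ x in (-1:ℝ)..1, (a * p x + (b * q x + c * r x))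
      = a * (∫ x in (-1:ℝ)..1, p x)
        + (b * (∫ x in (-1:ℝ)..1, q x) + c * ∫ x in (-1:ℝ)..1, r x) := by
  rw [intervalIntegral.integral_add ((by fun_prop : Continuous fun x => a * p x).intervalIntegrable _ _)
    ((by fun_prop : Continuous fun x => b * q x + c * r x).intervalIntegrable _ _),
    aux_int2 q r hq hr b c, intervalIntegral.integral_const_mul]

/-- the basic variational inequality against a nonnegative C¹ test function -/
lemma aux_SA (u ξ : ℝ → ℝ) (hu2 : ContDiff ℝ 2 u) (hub1 : u (-1) = 0) (hub2 : u 1 = 0)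
    (hsub : ∀ v : ℝ → ℝ, (Differentiable ℝ v ∧ v (-1) = 0 ∧ v 1 = 0 ∧
        IntervalIntegrable (fun x => (deriv v x) ^ 2) volume (-1) 1 ∧
        IntervalIntegrable v volume (-1) 1) →
      (∀ x ∈ Set.Icc (-1:ℝ) 1, u x ≤ v x) →
      (1/2) * (∫ x in (-1:ℝ)..1, (deriv u x) ^ 2) + (∫ x in (-1:ℝ)..1, u x)
        + (∫ x in (-1:ℝ)..1, ξ x * (v x - u x))
      ≤ (1/2) * (∫ x in (-1:ℝ)..1, (deriv v x) ^ 2) + ∫ x in (-1:ℝ)..1, v x)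
    (ψ : ℝ → ℝ) (hψ : ContDiff ℝ 1 ψ) (hψn : ∀ x, 0 ≤ ψ x)
    (hψ1 : ψ (-1) = 0) (hψ2 : ψ 1 = 0) :
    (∫ x in (-1:ℝ)..1, ξ x * ψ x)
      ≤ (∫ x in (-1:ℝ)..1, deriv u x * deriv ψ x) + (∫ x in (-1:ℝ)..1, ψ x)
        + (1/2) * ∫ x in (-1:ℝ)..1, (deriv ψ x) ^ 2 := by
  have hud : Differentiable ℝ u := hu2.differentiable (by norm_num)
  have hu'c : Continuous (deriv u) := (aux_c1 u hu2).continuous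
  have hψd : Differentiable ℝ ψ := hψ.differentiable one_ne_zero
  have hψc : Continuous ψ := hψd.continuous
  have hψ'c : Continuous (deriv ψ) := aux_c1' ψ hψ
  set v : ℝ → ℝ := fun x => u x + ψ x with hvdef
  have hdv : deriv v = fun x => deriv u x + deriv ψ x :=
    funext fun x => deriv_add (hud x) (hψd x)
  have hAdm : Differentiable ℝ v ∧ v (-1) = 0 ∧ v 1 = 0 ∧
      IntervalIntegrable (fun x => (deriv v x) ^ 2) volume (-1) 1 ∧
      IntervalIntegrable v volume (-1) 1 := by
    refine ⟨hud.add hψd, by simp [hvdef, hub1, hψ1], by simp [hvdef, hub2, hψ2], ?_, ?_⟩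
    · rw [hdv]; exact ((hu'c.add hψ'c).pow 2).intervalIntegrable _ _
    · exact (hud.continuous.add hψc).intervalIntegrable _ _
  have h := hsub v hAdm (fun x _ => le_add_of_nonneg_right (hψn x))
  have e0 : (∫ x in (-1:ℝ)..1, ξ x * (v x - u x)) = ∫ x in (-1:ℝ)..1, ξ x * ψ x :=
    intervalIntegral.integral_congr fun x _ => by simp [hvdef]
  have e1 : (∫ x in (-1:ℝ)..1, (deriv v x) ^ 2)
      = (∫ x in (-1:ℝ)..1, (deriv u x) ^ 2)
        + (2 * (∫ x in (-1:ℝ)..1, deriv u x * deriv ψ x)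
          + 1 * ∫ x in (-1:ℝ)..1, (deriv ψ x) ^ 2) := by
    rw [hdv]
    rw [show (∫ x in (-1:ℝ)..1, (deriv u x + deriv ψ x) ^ 2)
        = ∫ x in (-1:ℝ)..1, (1 * (deriv u x) ^ 2
          + (2 * (deriv u x * deriv ψ x) + 1 * (deriv ψ x) ^ 2)) from
      intervalIntegral.integral_congr fun x _ => by ring]
    rw [aux_int3 (fun x => deriv u x ^ 2) (fun x => deriv u x * deriv ψ x) (fun x => deriv ψ x ^ 2) (hu'c.pow 2) (hu'c.mul hψ'c) (hψ'c.pow 2) 1 2 1]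
    ring
  have e2 : (∫ x in (-1:ℝ)..1, v x)
      = (∫ x in (-1:ℝ)..1, u x) + ∫ x in (-1:ℝ)..1, ψ x :=
    intervalIntegral.integral_add (hud.continuous.intervalIntegrable _ _)
      (hψc.intervalIntegrable _ _)
  rw [e0, e1, e2] at h
  linarith

lemma aux_perbump (u ξ : ℝ → ℝ) (hu2 : ContDiff ℝ 2 u) (hub1 : u (-1) = 0) (hub2 : u 1 = 0)
    (hsub : ∀ v : ℝ → ℝ, (Differentiable ℝ v ∧ v (-1) = 0 ∧ v 1 = 0 ∧
        IntervalIntegrable (fun x => (deriv v x) ^ 2) volume (-1) 1 ∧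
        IntervalIntegrable v volume (-1) 1) →
      (∀ x ∈ Set.Icc (-1:ℝ) 1, u x ≤ v x) →
      (1/2) * (∫ x in (-1:ℝ)..1, (deriv u x) ^ 2) + (∫ x in (-1:ℝ)..1, u x)
        + (∫ x in (-1:ℝ)..1, ξ x * (v x - u x))
      ≤ (1/2) * (∫ x in (-1:ℝ)..1, (deriv v x) ^ 2) + ∫ x in (-1:ℝ)..1, v x)
    (f : ℝ → ℝ) (hf : ContDiff ℝ 1 f) (hfn : ∀ x, 0 ≤ f x) (hf1 : f (-1) = 0) (hf2 : f 1 = 0)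
    (hAstar : (∫ x in (-1:ℝ)..1, deriv u x * deriv f x) + (∫ x in (-1:ℝ)..1, f x) < 0)
    (g : ℝ → ℝ) (hg : ContDiff ℝ 1 g) (hgn : ∀ x, 0 ≤ g x) (hg1 : g (-1) = 0) (hg2 : g 1 = 0) :
    IntervalIntegrable (fun x => ξ x * g x) volume (-1) 1 ∧
    (∫ x in (-1:ℝ)..1, ξ x * g x)
      ≤ (∫ x in (-1:ℝ)..1, deriv u x * deriv g x) + ∫ x in (-1:ℝ)..1, g x := by
  have hfd : Differentiable ℝ f := hf.differentiable one_ne_zero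
  have hgd : Differentiable ℝ g := hg.differentiable one_ne_zero
  have hfc : Continuous f := hfd.continuous
  have hgc : Continuous g := hgd.continuous
  have hf'c : Continuous (deriv f) := aux_c1' f hf
  have hg'c : Continuous (deriv g) := aux_c1' g hg
  have hu'c : Continuous (deriv u) := (aux_c1 u hu2).continuous
  -- abbreviations
  set B1 := ∫ x in (-1:ℝ)..1, deriv u x * deriv f x with hB1
  set B2 := ∫ x in (-1:ℝ)..1, deriv u x * deriv g x with hB2
  set C1 := ∫ x in (-1:ℝ)..1, f x with hC1
  set C2 := ∫ x in (-1:ℝ)..1, g x with hC2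
  set D1 := ∫ x in (-1:ℝ)..1, (deriv f x) ^ 2 with hD1
  set D2 := ∫ x in (-1:ℝ)..1, (deriv g x) ^ 2 with hD2
  set D12 := ∫ x in (-1:ℝ)..1, deriv f x * deriv g x with hD12
  -- Part 1: integrability of ξ·g
  have hInt : IntervalIntegrable (fun x => ξ x * g x) volume (-1) 1 := by
    by_contra hni
    have hnon : ∀ t : ℝ, 0 < t →
        ¬ IntervalIntegrable (fun x => ξ x * (t * f x + t ^ 2 * g x)) volume (-1) 1 := by
      intro t ht hI
      apply hni
      refine aux_tr ξ (fun x => t * f x + t ^ 2 * g x) g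
        ((continuous_const.mul hfc).add (continuous_const.mul hgc)) hgc
        (fun x => add_nonneg (mul_nonneg ht.le (hfn x)) (mul_nonneg (by positivity) (hgn x)))
        hgn ((t ^ 2)⁻¹) (by positivity) (fun x => ?_) hI
      have he : (t ^ 2)⁻¹ * (t * f x + t ^ 2 * g x) = t⁻¹ * f x + g x := by
        field_simp
      rw [he]
      have : 0 ≤ t⁻¹ * f x := mul_nonneg (by positivity) (hfn x)
      linarith
    set M := |B2| + |C2| + (1/2) * |D1| + |D12| + (1/2) * |D2| with hM
    have hkey : ∀ t : ℝ, 0 < t → t ≤ 1 → 0 ≤ (B1 + C1) + t * M := by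
      intro t ht ht1
      set ψ : ℝ → ℝ := fun x => t * f x + t ^ 2 * g x with hψdef
      have hψ : ContDiff ℝ 1 ψ := (contDiff_const.mul hf).add (contDiff_const.mul hg)
      have hψn : ∀ x, 0 ≤ ψ x :=
        fun x => add_nonneg (mul_nonneg ht.le (hfn x)) (mul_nonneg (by positivity) (hgn x))
      have hSA := aux_SA u ξ hu2 hub1 hub2 hsub ψ hψ hψn
        (by simp [hψdef, hf1, hg1]) (by simp [hψdef, hf2, hg2])
      have hLHS : (∫ x in (-1:ℝ)..1, ξ x * ψ x) = 0 :=
        intervalIntegral.integral_undef (hnon t ht)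
      have hdψ : deriv ψ = fun x => t * deriv f x + t ^ 2 * deriv g x := by
        funext x
        rw [hψdef]
        exact (((hfd x).hasDerivAt.const_mul t).add ((hgd x).hasDerivAt.const_mul (t^2))).deriv
      have e1 : (∫ x in (-1:ℝ)..1, deriv u x * deriv ψ x) = t * B1 + t ^ 2 * B2 := by
        rw [hdψ]
        rw [show (∫ x in (-1:ℝ)..1, deriv u x * (t * deriv f x + t ^ 2 * deriv g x))
            = ∫ x in (-1:ℝ)..1, (t * (deriv u x * deriv f x)
              + t ^ 2 * (deriv u x * deriv g x)) from
          intervalIntegral.integral_congr fun x _ => by ring]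
        exact aux_int2 (fun x => deriv u x * deriv f x) (fun x => deriv u x * deriv g x) (hu'c.mul hf'c) (hu'c.mul hg'c) t (t ^ 2)
      have e2 : (∫ x in (-1:ℝ)..1, ψ x) = t * C1 + t ^ 2 * C2 :=
        aux_int2 f g hfc hgc t (t ^ 2)
      have e3 : (∫ x in (-1:ℝ)..1, (deriv ψ x) ^ 2)
          = t ^ 2 * D1 + (2 * t ^ 3 * D12 + t ^ 4 * D2) := by
        rw [hdψ]
        rw [show (∫ x in (-1:ℝ)..1, (t * deriv f x + t ^ 2 * deriv g x) ^ 2)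
            = ∫ x in (-1:ℝ)..1, (t ^ 2 * (deriv f x) ^ 2
              + (2 * t ^ 3 * (deriv f x * deriv g x) + t ^ 4 * (deriv g x) ^ 2)) from
          intervalIntegral.integral_congr fun x _ => by ring]
        exact aux_int3 (fun x => deriv f x ^ 2) (fun x => deriv f x * deriv g x) (fun x => deriv g x ^ 2) (hf'c.pow 2) (hf'c.mul hg'c) (hg'c.pow 2) (t^2) (2*t^3) (t^4)
      rw [hLHS, e1, e2, e3] at hSA
      -- 0 ≤ t*(B1+C1) + t^2 * stuff, stuff ≤ M
      have hstuff : B2 + C2 + (1/2) * D1 + t * D12 + (t ^ 2 / 2) * D2 ≤ M := by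
        have h1 : B2 ≤ |B2| := le_abs_self _
        have h2 : C2 ≤ |C2| := le_abs_self _
        have h3 : D1 ≤ |D1| := le_abs_self _
        have h4 : t * D12 ≤ |D12| := by
          calc t * D12 ≤ t * |D12| := mul_le_mul_of_nonneg_left (le_abs_self _) ht.le
            _ ≤ 1 * |D12| := mul_le_mul_of_nonneg_right ht1 (abs_nonneg _)
            _ = |D12| := one_mul _
        have h5 : (t ^ 2 / 2) * D2 ≤ (1/2) * |D2| := by
          have : t ^ 2 / 2 ≤ 1 / 2 := by nlinarith
          calc (t ^ 2 / 2) * D2 ≤ (t ^ 2 / 2) * |D2| :=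
              mul_le_mul_of_nonneg_left (le_abs_self _) (by positivity)
            _ ≤ (1/2) * |D2| := mul_le_mul_of_nonneg_right this (abs_nonneg _)
        rw [hM]; linarith
      have h0 : 0 ≤ t * ((B1 + C1) + t * (B2 + C2 + (1/2) * D1 + t * D12 + (t ^ 2 / 2) * D2)) := by
        nlinarith [hSA]
      have h0' : 0 ≤ (B1 + C1) + t * (B2 + C2 + (1/2) * D1 + t * D12 + (t ^ 2 / 2) * D2) :=
        nonneg_of_mul_nonneg_right h0 ht
      have := mul_le_mul_of_nonneg_left hstuff ht.le
      clear_value B1 B2 C1 C2 D1 D2 D12 M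
      linarith
    have := aux_eps (B1 + C1) M (by positivity) hkey
    linarith
  refine ⟨hInt, ?_⟩
  -- Part 2
  have hkey2 : ∀ t : ℝ, 0 < t → t ≤ 1 →
      0 ≤ (B2 + C2 - ∫ x in (-1:ℝ)..1, ξ x * g x) + t * ((1/2) * |D2|) := by
    intro t ht ht1
    set ψ : ℝ → ℝ := fun x => t * g x with hψdef
    have hSA := aux_SA u ξ hu2 hub1 hub2 hsub ψ (contDiff_const.mul hg)
      (fun x => mul_nonneg ht.le (hgn x)) (by simp [hψdef, hg1]) (by simp [hψdef, hg2])
    have hdψ : deriv ψ = fun x => t * deriv g x := by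
      funext x; rw [hψdef, deriv_const_mul t (hgd x)]
    have e0 : (∫ x in (-1:ℝ)..1, ξ x * ψ x) = t * ∫ x in (-1:ℝ)..1, ξ x * g x := by
      rw [show (∫ x in (-1:ℝ)..1, ξ x * ψ x) = ∫ x in (-1:ℝ)..1, t * (ξ x * g x) from
        intervalIntegral.integral_congr fun x _ => by rw [hψdef]; ring]
      exact intervalIntegral.integral_const_mul _ _
    have e1 : (∫ x in (-1:ℝ)..1, deriv u x * deriv ψ x) = t * B2 := by
      rw [hdψ]
      rw [show (∫ x in (-1:ℝ)..1, deriv u x * (t * deriv g x))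
          = ∫ x in (-1:ℝ)..1, t * (deriv u x * deriv g x) from
        intervalIntegral.integral_congr fun x _ => by ring]
      exact intervalIntegral.integral_const_mul _ _
    have e2 : (∫ x in (-1:ℝ)..1, ψ x) = t * C2 := intervalIntegral.integral_const_mul _ _
    have e3 : (∫ x in (-1:ℝ)..1, (deriv ψ x) ^ 2) = t ^ 2 * D2 := by
      rw [hdψ]
      rw [show (∫ x in (-1:ℝ)..1, (t * deriv g x) ^ 2)
          = ∫ x in (-1:ℝ)..1, t ^ 2 * (deriv g x) ^ 2 from
        intervalIntegral.integral_congr fun x _ => by ring]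
      exact intervalIntegral.integral_const_mul _ _
    rw [e0, e1, e2, e3] at hSA
    have hI : t * (∫ x in (-1:ℝ)..1, ξ x * g x) ≤ t * B2 + t * C2 + (1/2) * (t ^ 2 * D2) := hSA
    have hD2 : t * D2 ≤ |D2| := by
      calc t * D2 ≤ t * |D2| := mul_le_mul_of_nonneg_left (le_abs_self _) ht.le
        _ ≤ 1 * |D2| := mul_le_mul_of_nonneg_right ht1 (abs_nonneg _)
        _ = |D2| := one_mul _
    have h0 : 0 ≤ t * ((B2 + C2 - ∫ x in (-1:ℝ)..1, ξ x * g x) + t * ((1/2) * D2)) := by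
      nlinarith
    have h0' := nonneg_of_mul_nonneg_right h0 ht
    clear_value B1 B2 C1 C2 D1 D2 D12
    have h5 : t * D2 ≤ t * |D2| := mul_le_mul_of_nonneg_left (le_abs_self D2) ht.le
    linarith
  have := aux_eps _ _ (by positivity) hkey2
  clear_value B1 B2 C1 C2 D1 D2 D12
  linarith

/-- a.e. nonpositivity from nonpositive ball averages -/
lemma aux_ae_nonpos (h : ℝ → ℝ)
    (hint : ∀ a b : ℝ, -1 < a → b < 1 → IntegrableOn h (Set.Icc a b) volume)
    (hball : ∀ y r : ℝ, 0 < r → Set.Icc (y - 2*r) (y + 2*r) ⊆ Set.Ioo (-1:ℝ) 1 →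
      (∫ x in Metric.closedBall y r, h x) ≤ 0) :
    ∀ᵐ x ∂(volume.restrict (Set.Ioo (-1:ℝ) 1)), h x ≤ 0 := by
  have hC : ∀ e : ℝ, 0 < e → e ≤ 1/8 →
      ∀ᵐ x ∂(volume : Measure ℝ), x ∈ Set.Ioo (-1 + 4*e) (1 - 4*e) → h x ≤ 0 := by
    intro e he he8
    set H := (Set.Icc (-1+e) (1-e)).indicator h with hHdef
    have hHint : Integrable H volume :=
      (integrable_indicator_iff measurableSet_Icc).2 (hint _ _ (by linarith) (by linarith))
    have hLeb := IsUnifLocDoublingMeasure.ae_tendsto_average (μ := (volume : Measure ℝ))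
      hHint.locallyIntegrable 1
    filter_upwards [hLeb] with x hx hxmem
    obtain ⟨hx1, hx2⟩ := hxmem
    have hTen : Filter.Tendsto (fun r => ⨍ y in Metric.closedBall x r, H y)
        (nhdsWithin 0 (Set.Ioi 0)) (nhds (H x)) := by
      refine hx (fun _ => x) (fun r => r) Filter.tendsto_id ?_
      filter_upwards [self_mem_nhdsWithin] with r hr
      have hr' : (0:ℝ) < r := hr
      exact Metric.mem_closedBall_self (by linarith)
    have hev : ∀ᶠ r in nhdsWithin (0:ℝ) (Set.Ioi 0),
        (⨍ y in Metric.closedBall x r, H y) ≤ 0 := by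
      filter_upwards [Ioo_mem_nhdsGT_of_mem
          (show (0:ℝ) ∈ Set.Ico (0:ℝ) (e/2) from ⟨le_refl 0, by linarith⟩)]
        with r hr
      obtain ⟨hr0, hre⟩ := hr
      have h1 : Set.Icc (x - 2*r) (x + 2*r) ⊆ Set.Ioo (-1:ℝ) 1 :=
        Set.Icc_subset_Ioo (by linarith) (by linarith)
      have h2 := hball x r hr0 h1
      have h3 : (∫ y in Metric.closedBall x r, H y) = ∫ y in Metric.closedBall x r, h y := by
        refine setIntegral_congr_fun measurableSet_closedBall fun y hy => ?_
        rw [Real.closedBall_eq_Icc] at hy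
        exact Set.indicator_of_mem (Set.mem_Icc.2 ⟨by linarith [hy.1], by linarith [hy.2]⟩) h
      rw [setAverage_eq, h3, smul_eq_mul]
      exact mul_nonpos_of_nonneg_of_nonpos (by positivity) h2
    have hH : H x ≤ 0 := le_of_tendsto hTen hev
    rwa [hHdef, Set.indicator_of_mem (Set.mem_Icc.2 ⟨by linarith, by linarith⟩)] at hH
  have hCn : ∀ n : ℕ, ∀ᵐ x ∂(volume : Measure ℝ),
      x ∈ Set.Ioo (-1 + 4*(1/(8 + (n:ℝ)))) (1 - 4*(1/(8 + (n:ℝ)))) → h x ≤ 0 := by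
    intro n
    refine hC _ (by positivity) ?_
    rw [div_le_div_iff₀ (by positivity) (by norm_num)]
    norm_num
  rw [ae_restrict_iff' measurableSet_Ioo]
  filter_upwards [MeasureTheory.ae_all_iff.2 hCn] with x hx hxIoo
  obtain ⟨hx1, hx2⟩ := hxIoo
  obtain ⟨n, hn⟩ := exists_nat_gt (max (4/(x+1)) (4/(1-x)))
  have h8 : (0:ℝ) < 8 + n := by positivity
  have hxp1 : (0:ℝ) < x + 1 := by linarith
  have hxm1 : (0:ℝ) < 1 - x := by linarith
  have hn1 : 4/(x+1) < 8 + n := lt_of_le_of_lt (le_max_left _ _) (by linarith)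
  have hn2 : 4/(1-x) < 8 + n := lt_of_le_of_lt (le_max_right _ _) (by linarith)
  refine hx n ⟨?_, ?_⟩
  · have : 4 < (8 + (n:ℝ)) * (x + 1) := by
      rw [div_lt_iff₀ hxp1] at hn1; linarith
    have : 4 * (1/(8+(n:ℝ))) < x + 1 := by
      rw [mul_one_div, div_lt_iff₀ h8]; linarith
    linarith
  · have : 4 < (8 + (n:ℝ)) * (1 - x) := by
      rw [div_lt_iff₀ hxm1] at hn2; linarith
    have : 4 * (1/(8+(n:ℝ))) < 1 - x := by
      rw [mul_one_div, div_lt_iff₀ h8]; linarith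
    linarith

/-- `∫ (1-u'')·g = ∫ u'·g' + ∫ g` for C¹ test functions vanishing at the boundary -/
lemma aux_ibp2 (u : ℝ → ℝ) (hu2 : ContDiff ℝ 2 u) (g : ℝ → ℝ) (hg : ContDiff ℝ 1 g)
    (hg1 : g (-1) = 0) (hg2 : g 1 = 0) :
    (∫ x in (-1:ℝ)..1, (1 - deriv (deriv u) x) * g x)
      = (∫ x in (-1:ℝ)..1, deriv u x * deriv g x) + ∫ x in (-1:ℝ)..1, g x := by
  have hgd : Differentiable ℝ g := hg.differentiable one_ne_zero
  have hgc : Continuous g := hgd.continuous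
  have hg'c : Continuous (deriv g) := aux_c1' g hg
  have hu'c : Continuous (deriv u) := (aux_c1 u hu2).continuous
  have hcc : Continuous (deriv (deriv u)) := aux_cc u hu2
  have hIBP := aux_ibp u hu2 g hgd hg1 hg2 (hg'c.intervalIntegrable _ _)
  have hsplit : (∫ x in (-1:ℝ)..1, deriv (deriv u) x * g x)
      + (∫ x in (-1:ℝ)..1, deriv u x * deriv g x) = 0 := by
    rw [← intervalIntegral.integral_add
      ((show Continuous fun x => deriv (deriv u) x * g x from hcc.mul hgc).intervalIntegrable _ _)
      ((show Continuous fun x => deriv u x * deriv g x from hu'c.mul hg'c).intervalIntegrable _ _)]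
    exact hIBP
  have he : (∫ x in (-1:ℝ)..1, (1 - deriv (deriv u) x) * g x)
      = (∫ x in (-1:ℝ)..1, g x) - ∫ x in (-1:ℝ)..1, deriv (deriv u) x * g x := by
    rw [← intervalIntegral.integral_sub (hgc.intervalIntegrable _ _)
      ((show Continuous fun x => deriv (deriv u) x * g x from hcc.mul hgc).intervalIntegrable _ _)]
    exact intervalIntegral.integral_congr fun x _ => by ring
  linarith

lemma aux_key (u ξ : ℝ → ℝ) (hu2 : ContDiff ℝ 2 u) (hub1 : u (-1) = 0) (hub2 : u 1 = 0)
    (hnz : ¬ (∀ᵐ x ∂(volume.restrict (Set.Ioo (-1:ℝ) 1)),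
      max (deriv (deriv u) x - 1) 0 = 0))
    (hsub : ∀ v : ℝ → ℝ, (Differentiable ℝ v ∧ v (-1) = 0 ∧ v 1 = 0 ∧
        IntervalIntegrable (fun x => (deriv v x) ^ 2) volume (-1) 1 ∧
        IntervalIntegrable v volume (-1) 1) →
      (∀ x ∈ Set.Icc (-1:ℝ) 1, u x ≤ v x) →
      (1/2) * (∫ x in (-1:ℝ)..1, (deriv u x) ^ 2) + (∫ x in (-1:ℝ)..1, u x)
        + (∫ x in (-1:ℝ)..1, ξ x * (v x - u x))
      ≤ (1/2) * (∫ x in (-1:ℝ)..1, (deriv v x) ^ 2) + ∫ x in (-1:ℝ)..1, v x) :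
    ∀ᵐ x ∂(volume.restrict (Set.Ioo (-1:ℝ) 1)), ξ x ≤ 1 - deriv (deriv u) x := by
  have hcc : Continuous (deriv (deriv u)) := aux_cc u hu2
  have hu'c : Continuous (deriv u) := (aux_c1 u hu2).continuous
  -- a point where u'' > 1
  have hex : ∃ x₀ ∈ Set.Ioo (-1:ℝ) 1, 1 < deriv (deriv u) x₀ := by
    by_contra hno
    push_neg at hno
    exact hnz ((ae_restrict_iff' measurableSet_Ioo).2 (Filter.Eventually.of_forall
      fun x hx => max_eq_right (by linarith [hno x hx])))
  obtain ⟨x₀, hx₀, hcx₀⟩ := hex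
  -- a ball around x₀ where u'' > 1, inside Ioo
  have hU : IsOpen ({x | 1 < deriv (deriv u) x} ∩ Set.Ioo (-1:ℝ) 1) :=
    (isOpen_lt continuous_const hcc).inter isOpen_Ioo
  obtain ⟨δ, hδ0, hδ⟩ := Metric.isOpen_iff.1 hU x₀ ⟨hcx₀, hx₀⟩
  set fb : ContDiffBump x₀ := ⟨δ/2, δ, by linarith, by linarith⟩ with hfbdef
  set f : ℝ → ℝ := ⇑fb with hfdef
  have hfC1 : ContDiff ℝ 1 f := fb.contDiff
  have hfn : ∀ x, 0 ≤ f x := fb.nonneg'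
  have hfsupp : ∀ x, x ∉ Metric.ball x₀ δ → f x = 0 := by
    intro x hx
    refine Function.notMem_support.mp fun hmem => hx ?_
    have := fb.support_eq ▸ hmem
    exact this
  have hballIoo : Metric.ball x₀ δ ⊆ Set.Ioo (-1:ℝ) 1 :=
    fun z hz => (hδ hz).2
  have hf1 : f (-1) = 0 := hfsupp _ (fun hc => by have := hballIoo hc; simp at this)
  have hf2 : f 1 = 0 := hfsupp _ (fun hc => by have := hballIoo hc; simp at this)
  -- A* < 0
  have hpos : 0 < ∫ x in (-1:ℝ)..1, (deriv (deriv u) x - 1) * f x := by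
    refine aux_pos _ ((hcc.sub continuous_const).mul hfC1.continuous) ?_ x₀ hx₀ ?_
    · intro x _
      by_cases hx : x ∈ Metric.ball x₀ δ
      · have h1 : 1 < deriv (deriv u) x := (hδ hx).1
        exact mul_nonneg (by linarith) (hfn x)
      · rw [hfsupp x hx, mul_zero]
    · have hfx₀ : f x₀ = 1 := fb.one_of_mem_closedBall (Metric.mem_closedBall_self (le_of_lt fb.rIn_pos))
      rw [hfx₀, mul_one]
      linarith
  have hneg : (∫ x in (-1:ℝ)..1, (1 - deriv (deriv u) x) * f x) < 0 := by
    have he : (∫ x in (-1:ℝ)..1, (1 - deriv (deriv u) x) * f x)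
        = - ∫ x in (-1:ℝ)..1, (deriv (deriv u) x - 1) * f x := by
      rw [← intervalIntegral.integral_neg]
      exact intervalIntegral.integral_congr fun x _ => by ring
    rw [he]
    linarith
  have hAstar : (∫ x in (-1:ℝ)..1, deriv u x * deriv f x) + (∫ x in (-1:ℝ)..1, f x) < 0 := by
    rw [← aux_ibp2 u hu2 f hfC1 hf1 hf2]
    exact hneg
  -- per-bump result
  have hbump : ∀ (y : ℝ) (g : ContDiffBump y), Metric.ball y g.rOut ⊆ Set.Ioo (-1:ℝ) 1 →
      IntervalIntegrable (fun x => ξ x * g x) volume (-1) 1 ∧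
      (∫ x in (-1:ℝ)..1, ξ x * g x)
        ≤ (∫ x in (-1:ℝ)..1, deriv u x * deriv (⇑g) x) + ∫ x in (-1:ℝ)..1, g x := by
    intro y g hgsupp
    have hg1 : (⇑g) (-1) = 0 := by
      refine Function.notMem_support.mp fun hmem => ?_
      have := hgsupp (g.support_eq ▸ hmem)
      simp at this
    have hg2 : (⇑g) 1 = 0 := by
      refine Function.notMem_support.mp fun hmem => ?_
      have := hgsupp (g.support_eq ▸ hmem)
      simp at this
    exact aux_perbump u ξ hu2 hub1 hub2 hsub f hfC1 hfn hf1 hf2 hAstar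
      (⇑g) g.contDiff g.nonneg' hg1 hg2
  -- the function h
  set h : ℝ → ℝ := fun x => ξ x - (1 - deriv (deriv u) x) with hhdef
  -- integrability on compact subintervals
  have hint : ∀ a b : ℝ, -1 < a → b < 1 → IntegrableOn h (Set.Icc a b) volume := by
    intro a b ha hb
    by_cases hab : a ≤ b
    · set e' : ℝ := min (a+1) (1-b) / 4 with he'def
      have hmin1 : min (a+1) (1-b) ≤ a + 1 := min_le_left _ _
      have hmin2 : min (a+1) (1-b) ≤ 1 - b := min_le_right _ _
      have he'pos : 0 < e' := by
        rw [he'def]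
        have h1 : 0 < a + 1 := by linarith
        have h2 : 0 < 1 - b := by linarith
        positivity
      set gb : ContDiffBump ((a+b)/2) :=
        ⟨(b-a)/2 + e', (b-a)/2 + 2*e', by linarith, by linarith⟩ with hgbdef
      have hgsupp : Metric.ball ((a+b)/2) gb.rOut ⊆ Set.Ioo (-1:ℝ) 1 := by
        rw [show gb.rOut = (b-a)/2 + 2*e' from rfl, Real.ball_eq_Ioo]
        refine Set.Ioo_subset_Ioo ?_ ?_ <;> rw [he'def] <;> [linarith; linarith]
      obtain ⟨hIg, -⟩ := hbump _ gb hgsupp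
      have hIcc : Set.Icc a b ⊆ Set.Ioc (-1:ℝ) 1 :=
        fun z hz => ⟨lt_of_lt_of_le ha hz.1, le_trans hz.2 hb.le⟩
      have hIOn : IntegrableOn (fun x => ξ x * gb x) (Set.Icc a b) volume := by
        rw [intervalIntegrable_iff, Set.uIoc_of_le (by norm_num : (-1:ℝ) ≤ 1)] at hIg
        exact hIg.mono_set hIcc
      have hone : ∀ z ∈ Set.Icc a b, gb z = 1 := by
        intro z hz
        refine gb.one_of_mem_closedBall ?_
        rw [show gb.rIn = (b-a)/2 + e' from rfl, Real.closedBall_eq_Icc]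
        constructor <;> [linarith [hz.1]; linarith [hz.2]]
      have hξOn : IntegrableOn ξ (Set.Icc a b) volume := by
        refine hIOn.congr_fun (fun z hz => ?_) measurableSet_Icc
        show ξ z * gb z = ξ z
        rw [hone z hz, mul_one]
      exact hξOn.sub ((continuous_const.sub hcc).integrableOn_Icc)
    · rw [Set.Icc_eq_empty hab]
      exact integrableOn_empty
  -- ball integrals are nonpositive
  have hball : ∀ y r : ℝ, 0 < r → Set.Icc (y - 2*r) (y + 2*r) ⊆ Set.Ioo (-1:ℝ) 1 →
      (∫ x in Metric.closedBall y r, h x) ≤ 0 := by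
    intro y r hr hsub2
    have hy1 : -1 < y - 2*r := (hsub2 ⟨le_refl _, by linarith⟩).1
    have hy2 : y + 2*r < 1 := (hsub2 ⟨by linarith, le_refl _⟩).2
    have hh : IntegrableOn h (Set.Icc (y - 2*r) (y + 2*r)) volume := hint _ _ hy1 hy2
    -- the bump sequence
    set gn : ℕ → ContDiffBump y := fun n => ⟨r, r + r/(n+1), hr, lt_add_of_pos_right r (by positivity)⟩ with hgndef
    have hrle : ∀ n : ℕ, r / ((n:ℝ)+1) ≤ r := by
      intro n
      rw [div_le_iff₀ (by positivity)]
      nlinarith [hr.le, Nat.cast_nonneg (α := ℝ) n]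
    have hballIcc : ∀ n : ℕ, Metric.ball y (gn n).rOut ⊆ Set.Icc (y - 2*r) (y + 2*r) := by
      intro n
      rw [show (gn n).rOut = r + r/((n:ℝ)+1) from rfl, Real.ball_eq_Ioo]
      intro z hz
      exact ⟨by linarith [hz.1, hrle n], by linarith [hz.2, hrle n]⟩
    have hgnsupp : ∀ n : ℕ, Metric.ball y (gn n).rOut ⊆ Set.Ioo (-1:ℝ) 1 :=
      fun n => (hballIcc n).trans hsub2
    -- each bump integral is ≤ 0
    have hgnle : ∀ n : ℕ, (∫ x in (-1:ℝ)..1, h x * (gn n) x) ≤ 0 := by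
      intro n
      obtain ⟨hIn, hIe⟩ := hbump y (gn n) (hgnsupp n)
      have hg1 : (⇑(gn n)) (-1) = 0 := by
        refine Function.notMem_support.mp fun hmem => ?_
        have := (hgnsupp n) ((gn n).support_eq ▸ hmem)
        simp at this
      have hg2 : (⇑(gn n)) 1 = 0 := by
        refine Function.notMem_support.mp fun hmem => ?_
        have := (hgnsupp n) ((gn n).support_eq ▸ hmem)
        simp at this
      have hsplit : (∫ x in (-1:ℝ)..1, h x * (gn n) x)
          = (∫ x in (-1:ℝ)..1, ξ x * (gn n) x)
            - ∫ x in (-1:ℝ)..1, (1 - deriv (deriv u) x) * (gn n) x := by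
        rw [← intervalIntegral.integral_sub hIn
          ((show Continuous fun x => (1 - deriv (deriv u) x) * (gn n) x from
            (continuous_const.sub hcc).mul (gn n).continuous).intervalIntegrable _ _)]
        exact intervalIntegral.integral_congr fun x _ => by rw [hhdef]; ring
      rw [hsplit, aux_ibp2 u hu2 _ (gn n).contDiff hg1 hg2]
      linarith
    -- pass from interval integrals to integrals over the compact window
    have hwin : ∀ n : ℕ, (∫ x in (-1:ℝ)..1, h x * (gn n) x)
        = ∫ x in Set.Icc (y - 2*r) (y + 2*r), h x * (gn n) x := by
      intro n
      rw [intervalIntegral.integral_of_le (by linarith : (-1:ℝ) ≤ 1)]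
      refine MeasureTheory.setIntegral_eq_of_subset_of_forall_diff_eq_zero
        measurableSet_Ioc (hsub2.trans Set.Ioo_subset_Ioc_self) ?_
      intro x hx
      have h0 : (gn n) x = 0 := Function.notMem_support.mp
        (fun hmem => hx.2 (hballIcc n ((gn n).support_eq ▸ hmem)))
      rw [h0, mul_zero]
    -- dominated convergence
    have hcbIcc : Metric.closedBall y r ⊆ Set.Icc (y - 2*r) (y + 2*r) := by
      rw [Real.closedBall_eq_Icc]
      exact Set.Icc_subset_Icc (by linarith) (by linarith)
    have hDCT : Filter.Tendsto (fun n => ∫ x in Set.Icc (y - 2*r) (y + 2*r), h x * (gn n) x)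
        Filter.atTop
        (nhds (∫ x in Set.Icc (y - 2*r) (y + 2*r), (Metric.closedBall y r).indicator h x)) := by
      refine MeasureTheory.tendsto_integral_of_dominated_convergence (fun x => |h x|)
        ?_ ?_ ?_ ?_
      · intro n
        exact hh.aestronglyMeasurable.mul (gn n).continuous.aestronglyMeasurable
      · exact hh.abs
      · intro n
        refine Filter.Eventually.of_forall fun x => ?_
        rw [Real.norm_eq_abs, abs_mul]
        have h1 : |(gn n) x| ≤ 1 := by
          rw [abs_of_nonneg ((gn n).nonneg' x)]
          exact (gn n).le_one
        nlinarith [abs_nonneg (h x)]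
      · refine Filter.Eventually.of_forall fun x => ?_
        by_cases hx : x ∈ Metric.closedBall y r
        · have hone : ∀ n : ℕ, (gn n) x = 1 := fun n => (gn n).one_of_mem_closedBall hx
          rw [Set.indicator_of_mem hx]
          simpa [hone] using tendsto_const_nhds (α := ℝ) (f := Filter.atTop (α := ℕ))
        · rw [Set.indicator_of_notMem hx]
          have hd : r < dist x y := by rwa [Metric.mem_closedBall, not_le] at hx
          refine Filter.Tendsto.congr' ?_ (tendsto_const_nhds (x := (0:ℝ)))
          obtain ⟨N, hN⟩ := exists_nat_gt (r / (dist x y - r))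
          filter_upwards [Filter.eventually_ge_atTop N] with n hn
          have hdr : 0 < dist x y - r := by linarith
          have h1 : r / ((n:ℝ)+1) < dist x y - r := by
            have hNn : r / (dist x y - r) < (n:ℝ) + 1 := by
              have : (N:ℝ) ≤ n := Nat.cast_le.mpr hn
              linarith
            rw [div_lt_iff₀ (by positivity)]
            rw [div_lt_iff₀ hdr] at hNn
            nlinarith
          have h0 : (gn n) x = 0 := by
            refine (gn n).zero_of_le_dist ?_
            rw [show (gn n).rOut = r + r/((n:ℝ)+1) from rfl]
            linarith
          rw [h0, mul_zero]
    have hindEq : (∫ x in Set.Icc (y - 2*r) (y + 2*r), (Metric.closedBall y r).indicator h x)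
        = ∫ x in Metric.closedBall y r, h x := by
      rw [MeasureTheory.setIntegral_indicator measurableSet_closedBall,
        Set.inter_eq_self_of_subset_right hcbIcc]
    rw [← hindEq]
    refine le_of_tendsto hDCT (Filter.Eventually.of_forall fun n => ?_)
    rw [← hwin n]
    exact hgnle n
  have := aux_ae_nonpos h hint hball
  filter_upwards [this] with x hx
  simp only [hhdef] at hx
  linarith

/-- Non-monotonicity of the unilateral subdifferential: for
`F(w) = ½∫_{(−1,1)} |w'|² + w dx` (i.e. `f = −1`) on `H¹₀(−1,1)`, with
`∂₊F(w) = { ξ ∈ L² : F(v) ≥ F(w) + ⟨ξ, v − w⟩ for all admissible v ≥ w }`: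
`0 ∈ ∂₊F(0)` and `0` is the minimal selection `∂₊°F(0)`; if `u ∈ H¹₀(−1,1)` is `C²` with
`u > 0` on `(−1,1)` and `[u'' − 1]₊ ≢ 0`, then `ξmin = −[u''−1]₊` belongs to `∂₊F(u)`, has
minimal `L²`-norm there, is the unique minimizer (a.e.), and satisfies
`⟨ξmin − 0, u − 0⟩ < 0`.  Hence neither `∂₊°F` nor `∂₊F` is monotone on `L²`. -/
theorem unilateral_subdifferential_not_monotone
    (u : ℝ → ℝ) (hu2 : ContDiff ℝ 2 u) (hub1 : u (-1) = 0) (hub2 : u 1 = 0)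
    (hupos : ∀ x ∈ Set.Ioo (-1:ℝ) 1, 0 < u x)
    (hnz : ¬ (∀ᵐ x ∂(volume.restrict (Set.Ioo (-1:ℝ) 1)),
      max (deriv (deriv u) x - 1) 0 = 0)) :
    let F : (ℝ → ℝ) → ℝ := fun w =>
      (1/2) * (∫ x in (-1:ℝ)..1, (deriv w x) ^ 2) + ∫ x in (-1:ℝ)..1, w x
    let Adm : (ℝ → ℝ) → Prop := fun w => Differentiable ℝ w ∧ w (-1) = 0 ∧ w 1 = 0 ∧
      IntervalIntegrable (fun x => (deriv w x) ^ 2) volume (-1) 1 ∧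
      IntervalIntegrable w volume (-1) 1
    let sub : (ℝ → ℝ) → Set (ℝ → ℝ) := fun w =>
      {ξ | IntervalIntegrable (fun x => (ξ x) ^ 2) volume (-1) 1 ∧
        ∀ v : ℝ → ℝ, Adm v → (∀ x ∈ Set.Icc (-1:ℝ) 1, w x ≤ v x) →
          F w + (∫ x in (-1:ℝ)..1, ξ x * (v x - w x)) ≤ F v}
    let ξmin : ℝ → ℝ := fun x => -(max (deriv (deriv u) x - 1) 0)
    ((fun _ => (0:ℝ)) ∈ sub (fun _ => (0:ℝ))) ∧
    (∀ ξ ∈ sub (fun _ => (0:ℝ)),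
      (∫ x in (-1:ℝ)..1, ((0:ℝ)) ^ 2) ≤ ∫ x in (-1:ℝ)..1, (ξ x) ^ 2) ∧
    (ξmin ∈ sub u) ∧
    (∀ ξ ∈ sub u, (∫ x in (-1:ℝ)..1, (ξmin x) ^ 2) ≤ ∫ x in (-1:ℝ)..1, (ξ x) ^ 2) ∧
    (∀ ξ ∈ sub u,
      (∀ η ∈ sub u, (∫ x in (-1:ℝ)..1, (ξ x) ^ 2) ≤ ∫ x in (-1:ℝ)..1, (η x) ^ 2) →
      (∀ᵐ x ∂(volume.restrict (Set.Ioo (-1:ℝ) 1)), ξ x = ξmin x)) ∧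
    ((∫ x in (-1:ℝ)..1, (ξmin x - 0) * (u x - 0)) < 0) ∧
    (∃ (u₁ u₂ ξ₁ ξ₂ : ℝ → ℝ), ξ₁ ∈ sub u₁ ∧ ξ₂ ∈ sub u₂ ∧
      (∫ x in (-1:ℝ)..1, (ξ₁ x - ξ₂ x) * (u₁ x - u₂ x)) < 0) := by
  intro F Adm sub ξmin
  have hcc : Continuous (deriv (deriv u)) := aux_cc u hu2
  have hmc : Continuous (fun x => max (deriv (deriv u) x - 1) 0) :=
    (hcc.sub continuous_const).max continuous_const
  have hone : ((-1:ℝ)) ≤ 1 := by norm_num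
  -- zero squared integrand rewrite
  have hz2 : (fun x : ℝ => ((0:ℝ)) ^ 2) = fun _ : ℝ => (0:ℝ) := by funext x; norm_num
  -- Conjunct 1
  have hC1 : (fun _ => (0:ℝ)) ∈ sub (fun _ => (0:ℝ)) := by
    constructor
    · rw [hz2]; exact intervalIntegrable_const
    · intro v hv hge
      have hF0 : F (fun _ => (0:ℝ)) = 0 := by
        show (1/2) * (∫ x in (-1:ℝ)..1, (deriv (fun _ => (0:ℝ)) x) ^ 2)
            + ∫ x in (-1:ℝ)..1, (0:ℝ) = 0
        simp [deriv_const]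
      have hzint : (∫ x in (-1:ℝ)..1, (fun _ => (0:ℝ)) x * (v x - (fun _ => (0:ℝ)) x)) = 0 := by
        simp
      show F (fun _ => (0:ℝ)) + (∫ x in (-1:ℝ)..1, (fun _ => (0:ℝ)) x * (v x - (fun _ => (0:ℝ)) x)) ≤ F v
      rw [hF0, hzint]
      have h1 : 0 ≤ ∫ x in (-1:ℝ)..1, (deriv v x) ^ 2 :=
        intervalIntegral.integral_nonneg hone fun x _ => sq_nonneg _
      have h2 : 0 ≤ ∫ x in (-1:ℝ)..1, v x :=
        intervalIntegral.integral_nonneg hone fun x hx => hge x hx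
      show (0:ℝ) + 0 ≤ (1/2) * (∫ x in (-1:ℝ)..1, (deriv v x) ^ 2) + ∫ x in (-1:ℝ)..1, v x
      linarith
  -- Conjunct 2
  have hC2 : ∀ ξ ∈ sub (fun _ => (0:ℝ)),
      (∫ x in (-1:ℝ)..1, ((0:ℝ)) ^ 2) ≤ ∫ x in (-1:ℝ)..1, (ξ x) ^ 2 := by
    intro ξ hξ
    have h0 : (∫ x in (-1:ℝ)..1, ((0:ℝ)) ^ 2) = 0 := by norm_num
    rw [h0]
    exact intervalIntegral.integral_nonneg hone fun x _ => sq_nonneg _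
  -- Conjunct 3
  have hC3 : ξmin ∈ sub u := by
    constructor
    · exact ((hmc.neg.pow 2).intervalIntegrable _ _)
    · intro v hv hge
      exact aux_mem u hu2 hub1 hub2 v hv.1 hv.2.1 hv.2.2.1 hv.2.2.2.1 hv.2.2.2.2 hge
  -- pointwise consequence of the key bound
  have hsq_of_le : ∀ x : ℝ, ξmin x ≤ 0 ∧ (∀ ξx : ℝ, ξx ≤ 1 - deriv (deriv u) x →
      ξmin x ^ 2 ≤ ξx ^ 2) := by
    intro x
    constructor
    · exact neg_nonpos.2 (le_max_right _ _)
    · intro ξx hξx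
      by_cases hc : deriv (deriv u) x - 1 ≤ 0
      · have : ξmin x = 0 := by
          show -(max (deriv (deriv u) x - 1) 0) = 0
          rw [max_eq_right hc]; ring
        rw [this]
        simpa using sq_nonneg ξx
      · push_neg at hc
        have hmx : ξmin x = -(deriv (deriv u) x - 1) := by
          show -(max (deriv (deriv u) x - 1) 0) = -(deriv (deriv u) x - 1)
          rw [max_eq_left hc.le]
        rw [hmx]
        nlinarith [hc, hξx]
  -- interval integral to Ioo set integral conversion
  have hcv : ∀ g : ℝ → ℝ, (∫ x in (-1:ℝ)..1, g x) = ∫ x in Set.Ioo (-1:ℝ) 1, g x := by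
    intro g
    rw [intervalIntegral.integral_of_le hone, MeasureTheory.integral_Ioc_eq_integral_Ioo]
  have hIm : IntegrableOn (fun x => (ξmin x) ^ 2) (Set.Ioo (-1:ℝ) 1) volume :=
    ((hmc.neg.pow 2).integrableOn_Icc).mono_set Set.Ioo_subset_Icc_self
  have hIosq : ∀ ξ : ℝ → ℝ, IntervalIntegrable (fun x => (ξ x) ^ 2) volume (-1) 1 →
      IntegrableOn (fun x => (ξ x) ^ 2) (Set.Ioo (-1:ℝ) 1) volume := by
    intro ξ hξ
    rw [intervalIntegrable_iff, Set.uIoc_of_le hone] at hξ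
    exact hξ.mono_set Set.Ioo_subset_Ioc_self
  -- Conjunct 4
  have hC4 : ∀ ξ ∈ sub u, (∫ x in (-1:ℝ)..1, (ξmin x) ^ 2) ≤ ∫ x in (-1:ℝ)..1, (ξ x) ^ 2 := by
    intro ξ hξ
    have hkey := aux_key u ξ hu2 hub1 hub2 hnz hξ.2
    rw [hcv, hcv]
    refine MeasureTheory.integral_mono_ae hIm (hIosq ξ hξ.1) ?_
    filter_upwards [hkey] with x hx
    exact (hsq_of_le x).2 _ hx
  -- Conjunct 5
  have hC5 : ∀ ξ ∈ sub u,
      (∀ η ∈ sub u, (∫ x in (-1:ℝ)..1, (ξ x) ^ 2) ≤ ∫ x in (-1:ℝ)..1, (η x) ^ 2) →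
      (∀ᵐ x ∂(volume.restrict (Set.Ioo (-1:ℝ) 1)), ξ x = ξmin x) := by
    intro ξ hξ hminimal
    have h1 := hC4 ξ hξ
    have h2 := hminimal ξmin hC3
    have hkey := aux_key u ξ hu2 hub1 hub2 hnz hξ.2
    have hIξ := hIosq ξ hξ.1
    have heq : (∫ x in Set.Ioo (-1:ℝ) 1, ((ξ x) ^ 2 - (ξmin x) ^ 2)) = 0 := by
      rw [MeasureTheory.integral_sub hIξ hIm]
      rw [hcv, hcv] at h1 h2
      linarith
    have hnn : 0 ≤ᵐ[volume.restrict (Set.Ioo (-1:ℝ) 1)]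
        fun x => (ξ x) ^ 2 - (ξmin x) ^ 2 := by
      filter_upwards [hkey] with x hx
      exact sub_nonneg.2 ((hsq_of_le x).2 _ hx)
    have hz := (MeasureTheory.integral_eq_zero_iff_of_nonneg_ae hnn (hIξ.sub hIm)).1 heq
    filter_upwards [hkey, hz] with x hx1 hx2
    have hx2' : (ξ x) ^ 2 - (ξmin x) ^ 2 = 0 := hx2
    by_cases hc : deriv (deriv u) x - 1 ≤ 0
    · have hm0 : ξmin x = 0 := by
        show -(max (deriv (deriv u) x - 1) 0) = 0
        rw [max_eq_right hc]; ring
      rw [hm0]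
      rw [hm0] at hx2'
      have : (ξ x) ^ 2 = 0 := by linarith [hx2']
      exact sq_eq_zero_iff.1 (by linarith)
    · push_neg at hc
      have hmx : ξmin x = -(deriv (deriv u) x - 1) := by
        show -(max (deriv (deriv u) x - 1) 0) = -(deriv (deriv u) x - 1)
        rw [max_eq_left hc.le]
      rw [hmx] at hx2' ⊢
      have hfac : (ξ x - (1 - deriv (deriv u) x)) * (ξ x - (deriv (deriv u) x - 1)) = 0 := by
        linear_combination hx2'
      rcases mul_eq_zero.1 hfac with hf1 | hf2
      · linarith
      · linarith [hx1]
  -- existence of a point with u'' > 1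
  have hex : ∃ x₀ ∈ Set.Ioo (-1:ℝ) 1, 1 < deriv (deriv u) x₀ := by
    by_contra hno
    push_neg at hno
    exact hnz ((ae_restrict_iff' measurableSet_Ioo).2 (Filter.Eventually.of_forall
      fun x hx => max_eq_right (by linarith [hno x hx])))
  obtain ⟨x₀, hx₀, hcx₀⟩ := hex
  -- Conjunct 6
  have hC6 : (∫ x in (-1:ℝ)..1, (ξmin x - 0) * (u x - 0)) < 0 := by
    have hpos : 0 < ∫ x in (-1:ℝ)..1, (max (deriv (deriv u) x - 1) 0) * u x := by
      refine aux_pos _ (hmc.mul (hu2.continuous)) ?_ x₀ hx₀ ?_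
      · intro x hx
        have hu0 : 0 ≤ u x := by
          rcases eq_or_lt_of_le hx.2 with h | h
          · rw [h, hub2]
          · exact (hupos x ⟨hx.1, h⟩).le
        exact mul_nonneg (le_max_right _ _) hu0
      · rw [max_eq_left (by linarith)]
        exact mul_pos (by linarith) (hupos x₀ hx₀)
    have he : (∫ x in (-1:ℝ)..1, (ξmin x - 0) * (u x - 0))
        = - ∫ x in (-1:ℝ)..1, (max (deriv (deriv u) x - 1) 0) * u x := by
      rw [← intervalIntegral.integral_neg]
      refine intervalIntegral.integral_congr fun x _ => ?_
      show (-(max (deriv (deriv u) x - 1) 0) - 0) * (u x - 0)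
        = -((max (deriv (deriv u) x - 1) 0) * u x)
      ring
    rw [he]
    linarith
  -- Conjunct 7
  have hC7 : ∃ (u₁ u₂ ξ₁ ξ₂ : ℝ → ℝ), ξ₁ ∈ sub u₁ ∧ ξ₂ ∈ sub u₂ ∧
      (∫ x in (-1:ℝ)..1, (ξ₁ x - ξ₂ x) * (u₁ x - u₂ x)) < 0 := by
    refine ⟨fun _ => 0, u, fun _ => 0, ξmin, hC1, hC3, ?_⟩
    have he : (∫ x in (-1:ℝ)..1, ((fun _ => (0:ℝ)) x - ξmin x) * ((fun _ => (0:ℝ)) x - u x))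
        = ∫ x in (-1:ℝ)..1, (ξmin x - 0) * (u x - 0) :=
      intervalIntegral.integral_congr fun x _ => by ring
    rw [he]
    exact hC6
  exact ⟨hC1, hC2, hC3, hC4, hC5, hC6, hC7⟩
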